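/- Let (X,d) be a locally compact, complete metric space and let f : X → X be a continuous map with a fixed point x* ∈ X such that x* is attractive (d(fⁿ(x), x*) → 0 as n → ∞ for every x ∈ X) and stable (for every ε > 0 there exists δ > 0 such that d(fⁿ(x), x*) < ε for all n ∈ ℕ and all x ∈ X with d(x, x*) < δ). Then there exists a metric d' on X inducing the same topology as d such that f is a contraction with respect to d': for some c ∈ [0,1), d'(f(x), f(y)) ≤ c·d'(x,y) for all x, y ∈ X. -/

import Mathlib

open Filter Metric

namespace ConverseBanachAux

variable {X : Type*} [MetricSpace X]

/-- Uniform attraction on compact sets. -/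
theorem unif_attract (f : X → X) (hf : Continuous f) (x : X)
    (hattr : ∀ z : X, Tendsto (fun n => dist (f^[n] z) x) atTop (nhds 0))
    (hstab : ∀ ε > 0, ∃ δ > 0, ∀ z : X, dist z x < δ → ∀ n : ℕ, dist (f^[n] z) x < ε)
    {K : Set X} (hK : IsCompact K) {ε : ℝ} (hε : 0 < ε) :
    ∃ N : ℕ, ∀ z ∈ K, ∀ n ≥ N, dist (f^[n] z) x < ε := by
  obtain ⟨δ, hδpos, hδ⟩ := hstab ε hε
  set U : ℕ → Set X := fun m => {z | dist (f^[m] z) x < δ} with hU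
  have hUopen : ∀ m, IsOpen (U m) := by
    intro m
    have : Continuous fun z => dist (f^[m] z) x := (hf.iterate m).dist continuous_const
    exact isOpen_lt this continuous_const
  have hcover : K ⊆ ⋃ m, U m := by
    intro z _
    obtain ⟨m, hm⟩ := ((hattr z).eventually_lt_const hδpos).exists
    exact Set.mem_iUnion.2 ⟨m, hm⟩
  obtain ⟨t, ht⟩ := hK.elim_finite_subcover U hUopen hcover
  refine ⟨(t.sup id) + 1, fun z hz n hn => ?_⟩
  obtain ⟨m, hmt, hzm⟩ := Set.mem_iUnion₂.1 (ht hz)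
  have hmn : m ≤ n := le_trans (Nat.le_succ_of_le (Finset.le_sup (f := id) hmt)) hn
  have : f^[n] z = f^[n - m] (f^[m] z) := by
    rw [← Function.iterate_add_apply, Nat.sub_add_cancel hmn]
  rw [this]
  exact hδ _ hzm _


/-- The forward-invariant set of points whose whole orbit stays within `r` of `x`. -/
def Tset (f : X → X) (x : X) (r : ℝ) : Set X := {z | ∀ n : ℕ, dist (f^[n] z) x ≤ r}

theorem Tset_isClosed (f : X → X) (hf : Continuous f) (x : X) (r : ℝ) :
    IsClosed (Tset f x r) := by
  have : Tset f x r = ⋂ n : ℕ, {z | dist (f^[n] z) x ≤ r} := by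
    ext z; simp [Tset, Set.mem_iInter]
  rw [this]
  exact isClosed_iInter fun n =>
    isClosed_le ((hf.iterate n).dist continuous_const) continuous_const

theorem Tset_subset_closedBall (f : X → X) (x : X) (r : ℝ) :
    Tset f x r ⊆ closedBall x r := fun z hz => by
  simpa using hz 0

theorem x_mem_Tset (f : X → X) (x : X) (hfix : f x = x) {r : ℝ} (hr : 0 ≤ r) :
    x ∈ Tset f x r := fun n => by
  rw [Function.iterate_fixed hfix]; simpa using hr

theorem Tset_inv (f : X → X) (x : X) (r : ℝ) {z : X} (hz : z ∈ Tset f x r) :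
    f z ∈ Tset f x r := fun n => by
  rw [← Function.iterate_succ_apply]; exact hz (n + 1)

theorem Tset_inv_iter (f : X → X) (x : X) (r : ℝ) {z : X} (hz : z ∈ Tset f x r) (k : ℕ) :
    f^[k] z ∈ Tset f x r := by
  induction k with
  | zero => exact hz
  | succ k ih => rw [Function.iterate_succ_apply']; exact Tset_inv f x r ih

/-- ball from stability lands in Tset -/
theorem ball_subset_Tset (f : X → X) (x : X) {r δ : ℝ}
    (hδ : ∀ z : X, dist z x < δ → ∀ n : ℕ, dist (f^[n] z) x < r) {z : X}
    (hz : dist z x < δ) : z ∈ Tset f x r := fun n => (hδ z hz n).le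

/-- A `[0,1]`-valued continuous function vanishing exactly on (a nbhd basis of) `S`. -/
noncomputable def bump (S : Set X) (z : X) : ℝ := min 1 (infDist z S)

theorem bump_nonneg (S : Set X) (z : X) : 0 ≤ bump S z :=
  le_min zero_le_one infDist_nonneg

theorem bump_le_one (S : Set X) (z : X) : bump S z ≤ 1 := min_le_left _ _

theorem bump_continuous (S : Set X) : Continuous (bump S) :=
  continuous_const.min (continuous_infDist_pt S)

theorem bump_eq_zero (S : Set X) {z : X} (hz : z ∈ S) : bump S z = 0 := by
  simp [bump, infDist_zero_of_mem hz]

theorem bump_ge (S : Set X) (hS : S.Nonempty) {x z : X} {ε : ℝ}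
    (hfar : ∀ w ∈ S, dist w x ≤ ε / 2) (hz : ε ≤ dist z x) :
    min 1 (ε / 2) ≤ bump S z := by
  refine min_le_min le_rfl ?_
  rw [infDist_eq_iInf]
  have : Nonempty S := hS.to_subtype
  refine le_ciInf fun w => ?_
  have h1 : dist z x ≤ dist z w.1 + dist w.1 x := dist_triangle _ _ _
  have := hfar w.1 w.2
  linarith

/-- The one-scale Lyapunov function. -/
noncomputable def lya (f : X → X) (S : Set X) (z : X) : ℝ :=
  ∑' n : ℕ, 4 ^ n * bump S (f^[n] z)

theorem lya_summable (f : X → X) (S : Set X) {z : X} {M : ℕ}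
    (hM : ∀ n ≥ M, f^[n] z ∈ S) :
    Summable (fun n : ℕ => (4:ℝ) ^ n * bump S (f^[n] z)) := by
  refine summable_of_ne_finset_zero (s := Finset.range M) fun n hn => ?_
  rw [Finset.mem_range, not_lt] at hn
  rw [bump_eq_zero S (hM n hn), mul_zero]

theorem sum_pow_four_le : ∀ M : ℕ, (∑ n ∈ Finset.range M, (4:ℝ) ^ n) ≤ 4 ^ M := by
  intro M
  induction M with
  | zero => simp
  | succ M ih =>
      rw [Finset.sum_range_succ, pow_succ]
      have : (1:ℝ) ≤ 4 ^ M := one_le_pow₀ (by norm_num)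
      nlinarith

theorem lya_nonneg (f : X → X) (S : Set X) (z : X) : 0 ≤ lya f S z :=
  tsum_nonneg fun n => mul_nonneg (by positivity) (bump_nonneg _ _)

theorem lya_le (f : X → X) (S : Set X) {z : X} {M : ℕ}
    (hM : ∀ n ≥ M, f^[n] z ∈ S) : lya f S z ≤ 4 ^ M := by
  have h0 : ∀ n ∉ Finset.range M, (4:ℝ) ^ n * bump S (f^[n] z) = 0 := by
    intro n hn
    rw [Finset.mem_range, not_lt] at hn
    rw [bump_eq_zero S (hM n hn), mul_zero]
  rw [lya, tsum_eq_sum h0]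
  calc (∑ n ∈ Finset.range M, (4:ℝ) ^ n * bump S (f^[n] z))
      ≤ ∑ n ∈ Finset.range M, (4:ℝ) ^ n := by
        refine Finset.sum_le_sum fun n _ => ?_
        have := bump_le_one S (f^[n] z)
        have h4 : (0:ℝ) < 4 ^ n := by positivity
        nlinarith [bump_nonneg S (f^[n] z)]
    _ ≤ 4 ^ M := sum_pow_four_le M

theorem bump_le_lya (f : X → X) (S : Set X) {z : X}
    (hsum : Summable (fun n : ℕ => (4:ℝ) ^ n * bump S (f^[n] z))) :
    bump S z ≤ lya f S z := by
  have := Summable.le_tsum hsum 0 (fun j _ => mul_nonneg (by positivity) (bump_nonneg _ _))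
  simpa [lya] using this

theorem lya_shift (f : X → X) (S : Set X) {z : X}
    (hsum : Summable (fun n : ℕ => (4:ℝ) ^ n * bump S (f^[n] z))) :
    lya f S (f z) ≤ lya f S z / 4 := by
  have hshift : ∀ n : ℕ, (4:ℝ) ^ (n+1) * bump S (f^[n+1] z)
      = 4 * ((4:ℝ) ^ n * bump S (f^[n] (f z))) := by
    intro n
    rw [Function.iterate_succ_apply]
    ring
  have h1 : lya f S z = bump S z + ∑' n : ℕ, (4:ℝ) ^ (n+1) * bump S (f^[n+1] z) := by
    rw [lya, Summable.tsum_eq_zero_add hsum]; simp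
  have h2 : (∑' n : ℕ, (4:ℝ) ^ (n+1) * bump S (f^[n+1] z)) = 4 * lya f S (f z) := by
    rw [lya, ← tsum_mul_left]
    exact tsum_congr hshift
  have := lya_nonneg f S (f z)
  have hb := bump_nonneg S z
  rw [h1, h2]
  linarith

theorem lya_continuousAt (f : X → X) (hf : Continuous f) (S : Set X) {z₀ : X}
    {V : Set X} (hV : V ∈ nhds z₀) {M : ℕ} (hM : ∀ w ∈ V, ∀ n ≥ M, f^[n] w ∈ S) :
    ContinuousAt (lya f S) z₀ := by
  have hev : (fun w => ∑ n ∈ Finset.range M, (4:ℝ) ^ n * bump S (f^[n] w)) =ᶠ[nhds z₀]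
      lya f S := by
    filter_upwards [hV] with w hw
    rw [lya, tsum_eq_sum]
    intro n hn
    rw [Finset.mem_range, not_lt] at hn
    rw [bump_eq_zero S (hM w hw n hn), mul_zero]
  have hc : Continuous (fun w => ∑ n ∈ Finset.range M, (4:ℝ) ^ n * bump S (f^[n] w)) := by
    refine continuous_finset_sum _ fun n _ => ?_
    exact continuous_const.mul ((bump_continuous S).comp (hf.iterate n))
  exact hc.continuousAt.congr hev


theorem exists_psi (f : X → X) (hf : Continuous f) (x : X) (hfix : f x = x)
    [LocallyCompactSpace X]
    (hattr : ∀ z : X, Tendsto (fun n => dist (f^[n] z) x) atTop (nhds 0))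
    (hstab : ∀ ε > 0, ∃ δ > 0, ∀ z : X, dist z x < δ → ∀ n : ℕ, dist (f^[n] z) x < ε) :
    ∃ ψ : X → ℝ, Continuous ψ ∧ (∀ z, 0 ≤ ψ z) ∧ (∀ z, ψ (f z) ≤ ψ z / 4) ∧
      (∀ ε > 0, ∃ η > 0, ∀ z : X, ψ z < η → dist z x < ε) := by
  -- a compact closed ball around x
  obtain ⟨K, hKcomp, hKnhds⟩ := exists_compact_mem_nhds x
  obtain ⟨R₀, hR₀pos, hR₀⟩ := Metric.mem_nhds_iff.1 hKnhds
  set R : ℝ := R₀ / 2 with hRdef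
  have hRpos : 0 < R := by positivity
  -- scales
  set r : ℕ → ℝ := fun k => R / 2 ^ k with hrdef
  have hrpos : ∀ k, 0 < r k := fun k => by positivity
  have hrleR : ∀ k, r k ≤ R := by
    intro k
    have h1 : (1:ℝ) ≤ 2 ^ k := one_le_pow₀ (by norm_num)
    rw [hrdef]
    rw [div_le_iff₀ (by positivity)]
    nlinarith
  -- nested invariant compact sets
  set T : ℕ → Set X := fun k => Tset f x (r k) with hTdef
  have hTsub : ∀ k, T k ⊆ closedBall x (r k) := fun k => Tset_subset_closedBall f x (r k)
  have hTne : ∀ k, (T k).Nonempty := fun k => ⟨x, x_mem_Tset f x hfix (hrpos k).le⟩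
  -- stability radii
  have hδs' : ∀ k : ℕ, ∃ δ > 0, ∀ z : X, dist z x < δ → ∀ n : ℕ, dist (f^[n] z) x < r k :=
    fun k => hstab (r k) (hrpos k)
  choose δs hδspos hδs using hδs'
  -- every orbit is eventually absorbed into T k
  have habsorb : ∀ (z : X) (k : ℕ), ∃ m : ℕ, ∀ n ≥ m, f^[n] z ∈ T k := by
    intro z k
    obtain ⟨m, hm⟩ := ((hattr z).eventually_lt_const (hδspos k)).exists
    refine ⟨m, fun n hn => ?_⟩
    have h1 : f^[m] z ∈ T k := ball_subset_Tset f x (hδs k) hm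
    have h2 : f^[n] z = f^[n - m] (f^[m] z) := by
      rw [← Function.iterate_add_apply, Nat.sub_add_cancel hn]
    rw [h2]
    exact Tset_inv_iter f x (r k) h1 _
  -- uniform absorption on compact sets
  have hunif : ∀ (V : Set X), IsCompact V → ∀ k : ℕ,
      ∃ M : ℕ, ∀ w ∈ V, ∀ n ≥ M, f^[n] w ∈ T k := by
    intro V hV k
    obtain ⟨M, hM⟩ := unif_attract f hf x hattr hstab hV (hδspos k)
    exact ⟨M, fun w hw n hn => ball_subset_Tset f x (hδs k) (hM w hw n hn)⟩
  -- summability of one-scale Lyapunov functions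
  have hsumlya : ∀ (k : ℕ) (z : X),
      Summable (fun n : ℕ => (4:ℝ) ^ n * bump (T k) (f^[n] z)) := by
    intro k z
    obtain ⟨m, hm⟩ := habsorb z k
    exact lya_summable f (T k) hm
  -- uniform entrance times from the big ball
  have hballcomp : IsCompact (closedBall x R) := by
    refine hKcomp.of_isClosed_subset Metric.isClosed_closedBall (fun z hz => hR₀ ?_)
    have h1 : dist z x ≤ R := mem_closedBall.1 hz
    have h2 : dist z x < R₀ := by rw [hRdef] at h1; linarith
    exact mem_ball.2 h2
  have hN' : ∀ k : ℕ, ∃ M : ℕ, ∀ w ∈ closedBall x R, ∀ n ≥ M, f^[n] w ∈ T k :=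
    fun k => hunif _ hballcomp k
  choose N hN using hN'
  -- the weights
  set c : ℕ → ℝ := fun k => ((4:ℝ) ^ (N (k+1) + k))⁻¹ with hcdef
  have hcpos : ∀ k, 0 < c k := fun k => by positivity
  -- key local bound
  have hlocbd : ∀ (V : Set X) (MV : ℕ),
      (∀ w ∈ V, ∀ n ≥ MV, f^[n] w ∈ closedBall x R) →
      ∀ (k : ℕ), ∀ w ∈ V, c k * lya f (T (k+1)) w ≤ (4:ℝ) ^ MV * (4:ℝ)⁻¹ ^ k := by
    intro V MV hMV k w hw
    have habs : ∀ n ≥ MV + N (k+1), f^[n] w ∈ T (k+1) := by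
      intro n hn
      have h1 : f^[MV] w ∈ closedBall x R := hMV w hw MV le_rfl
      have h2 : f^[n] w = f^[n - MV] (f^[MV] w) := by
        rw [← Function.iterate_add_apply, Nat.sub_add_cancel]
        exact le_trans (Nat.le_add_right _ _) hn
      rw [h2]
      exact hN (k+1) _ h1 _ (by omega)
    have hle : lya f (T (k+1)) w ≤ (4:ℝ) ^ (MV + N (k+1)) := lya_le f _ habs
    have h3 : c k * lya f (T (k+1)) w ≤ c k * (4:ℝ) ^ (MV + N (k+1)) := by
      exact mul_le_mul_of_nonneg_left hle (hcpos k).le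
    refine h3.trans (le_of_eq ?_)
    simp only [hcdef]
    rw [pow_add, pow_add, inv_pow]
    field_simp
  -- any point has a compact neighbourhood with uniform absorption into the big ball
  have hlocV : ∀ z₀ : X, ∃ V ∈ nhds z₀, ∃ MV : ℕ,
      ∀ w ∈ V, ∀ n ≥ MV, f^[n] w ∈ closedBall x R := by
    intro z₀
    obtain ⟨V, hVcomp, hVnhds⟩ := exists_compact_mem_nhds z₀
    obtain ⟨M, hM⟩ := hunif V hVcomp 0
    exact ⟨V, hVnhds, M, fun w hw n hn =>
      closedBall_subset_closedBall (hrleR 0) (hTsub 0 (hM w hw n hn))⟩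
  -- define ψ
  set ψ : X → ℝ := fun z => ∑' k : ℕ, c k * lya f (T (k+1)) z with hψdef
  -- summability in k
  have hsumψ : ∀ z : X, Summable (fun k : ℕ => c k * lya f (T (k+1)) z) := by
    intro z
    obtain ⟨V, hVnhds, MV, hMV⟩ := hlocV z
    refine Summable.of_nonneg_of_le
      (fun k => mul_nonneg (hcpos k).le (lya_nonneg f _ z))
      (fun k => hlocbd V MV hMV k z (mem_of_mem_nhds hVnhds)) ?_
    exact (summable_geometric_of_lt_one (by norm_num) (by norm_num)).mul_left _
  have hψnonneg : ∀ z, 0 ≤ ψ z := fun z =>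
    tsum_nonneg fun k => mul_nonneg (hcpos k).le (lya_nonneg f _ z)
  -- continuity
  have hlyacont : ∀ k : ℕ, Continuous (lya f (T (k+1))) := by
    intro k
    rw [continuous_iff_continuousAt]
    intro z₀
    obtain ⟨V, hVcomp, hVnhds⟩ := exists_compact_mem_nhds z₀
    obtain ⟨M, hM⟩ := hunif V hVcomp (k+1)
    exact lya_continuousAt f hf (T (k+1)) hVnhds hM
  have hψcont : Continuous ψ := by
    rw [continuous_iff_continuousAt]
    intro z₀
    obtain ⟨V, hVnhds, MV, hMV⟩ := hlocV z₀
    have huc : TendstoUniformlyOn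
        (fun (m : ℕ) (w : X) => ∑ k ∈ Finset.range m, c k * lya f (T (k+1)) w)
        (fun w => ∑' k : ℕ, c k * lya f (T (k+1)) w) atTop V := by
      refine tendstoUniformlyOn_tsum_nat
        (u := fun k => (4:ℝ) ^ MV * (4:ℝ)⁻¹ ^ k)
        ((summable_geometric_of_lt_one (by norm_num) (by norm_num)).mul_left _) ?_
      intro k w hw
      rw [Real.norm_eq_abs, abs_of_nonneg (mul_nonneg (hcpos k).le (lya_nonneg f _ w))]
      exact hlocbd V MV hMV k w hw
    have hconts : ∀ᶠ (m : ℕ) in atTop, ContinuousOn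
        (fun w => ∑ k ∈ Finset.range m, c k * lya f (T (k+1)) w) V := by
      refine Eventually.of_forall fun m => Continuous.continuousOn ?_
      exact continuous_finset_sum _ fun k _ => continuous_const.mul (hlyacont k)
    exact ((huc.continuousOn hconts.frequently).continuousAt hVnhds)
  -- the one-step decay
  have hψdecay : ∀ z, ψ (f z) ≤ ψ z / 4 := by
    intro z
    have h1 : ∀ k : ℕ, c k * lya f (T (k+1)) (f z) ≤ (1/4) * (c k * lya f (T (k+1)) z) := by
      intro k
      have := lya_shift f (T (k+1)) (hsumlya (k+1) z)
      nlinarith [(hcpos k).le, mul_le_mul_of_nonneg_left this (hcpos k).le]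
    have h2 : ψ (f z) ≤ ∑' k : ℕ, (1/4) * (c k * lya f (T (k+1)) z) := by
      exact Summable.tsum_le_tsum h1 (hsumψ (f z)) ((hsumψ z).mul_left _)
    calc ψ (f z) ≤ ∑' k : ℕ, (1/4) * (c k * lya f (T (k+1)) z) := h2
      _ = (1/4) * ψ z := tsum_mul_left
      _ = ψ z / 4 := by ring
  -- the smallness property
  have hψsmall : ∀ ε > 0, ∃ η > 0, ∀ z : X, ψ z < η → dist z x < ε := by
    intro ε hε
    obtain ⟨k, hk⟩ := exists_pow_lt_of_lt_one (x := ε / (2 * R)) (y := (2:ℝ)⁻¹)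
      (by positivity) (by norm_num)
    have hrk : r (k+1) ≤ ε / 2 := by
      have h1 : r (k+1) ≤ r k := by
        rw [hrdef]
        have : (2:ℝ)^k ≤ 2^(k+1) := by
          rw [pow_succ]; nlinarith [pow_pos (by norm_num : (0:ℝ) < 2) k]
        exact div_le_div_of_nonneg_left hRpos.le (by positivity) this
      have h2 : r k = R * (2:ℝ)⁻¹ ^ k := by rw [hrdef]; rw [inv_pow]; ring
      have h3 : r k < R * (ε / (2 * R)) := by
        rw [h2]
        exact mul_lt_mul_of_pos_left hk hRpos
      have h4 : R * (ε / (2 * R)) = ε / 2 := by field_simp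
      linarith
    refine ⟨c k * min 1 (ε / 2), by positivity, fun z hz => ?_⟩
    by_contra hcon
    push_neg at hcon
    have hbump : min 1 (ε / 2) ≤ bump (T (k+1)) z := by
      refine bump_ge (T (k+1)) (hTne (k+1)) (x := x) ?_ hcon
      intro w hw
      exact le_trans (mem_closedBall.1 (hTsub (k+1) hw)) hrk
    have hlyage : min 1 (ε/2) ≤ lya f (T (k+1)) z :=
      le_trans hbump (bump_le_lya f _ (hsumlya (k+1) z))
    have h5 : c k * min 1 (ε/2) ≤ c k * lya f (T (k+1)) z :=
      mul_le_mul_of_nonneg_left hlyage (hcpos k).le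
    have h6 : c k * lya f (T (k+1)) z ≤ ψ z := by
      refine Summable.le_tsum (hsumψ z) k fun j _ => mul_nonneg (hcpos j).le (lya_nonneg f _ z)
    linarith
  exact ⟨ψ, hψcont, hψnonneg, hψdecay, hψsmall⟩


/-- The auxiliary "shortcut through x" premetric. -/
noncomputable def sigSet (ψ : X → ℝ) (a b : X) : Set ℝ :=
  insert (dist a b) {s | ∃ u v : X, s = dist a u + ψ u + ψ v + dist v b}

noncomputable def sig (ψ : X → ℝ) (a b : X) : ℝ := sInf (sigSet ψ a b)

variable {ψ : X → ℝ}

theorem sigSet_nonempty (a b : X) : (sigSet ψ a b).Nonempty :=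
  ⟨dist a b, Set.mem_insert _ _⟩

theorem sigSet_bddBelow (hψ0 : ∀ z, 0 ≤ ψ z) (a b : X) : BddBelow (sigSet ψ a b) := by
  refine ⟨0, fun s hs => ?_⟩
  rcases hs with h | ⟨u, v, h⟩
  · rw [h]; exact dist_nonneg
  · rw [h]
    have := hψ0 u; have := hψ0 v
    have := dist_nonneg (x := a) (y := u); have := dist_nonneg (x := v) (y := b)
    linarith

theorem sig_nonneg (hψ0 : ∀ z, 0 ≤ ψ z) (a b : X) : 0 ≤ sig ψ a b := by
  refine le_csInf (sigSet_nonempty a b) fun s hs => ?_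
  rcases hs with h | ⟨u, v, h⟩
  · rw [h]; exact dist_nonneg
  · rw [h]
    have := hψ0 u; have := hψ0 v
    have := dist_nonneg (x := a) (y := u); have := dist_nonneg (x := v) (y := b)
    linarith

theorem sig_le_dist (hψ0 : ∀ z, 0 ≤ ψ z) (a b : X) : sig ψ a b ≤ dist a b :=
  csInf_le (sigSet_bddBelow hψ0 a b) (Set.mem_insert _ _)

theorem sig_le_psi (hψ0 : ∀ z, 0 ≤ ψ z) (a b : X) : sig ψ a b ≤ ψ a + ψ b := by
  refine csInf_le (sigSet_bddBelow hψ0 a b) (Set.mem_insert_iff.2 (Or.inr ⟨a, b, ?_⟩))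
  simp

theorem sig_self (hψ0 : ∀ z, 0 ≤ ψ z) (a : X) : sig ψ a a = 0 := by
  refine le_antisymm ?_ (sig_nonneg hψ0 a a)
  have := sig_le_dist hψ0 a a
  simpa using this

theorem sig_comm (a b : X) : sig ψ a b = sig ψ b a := by
  unfold sig sigSet
  congr 1
  rw [dist_comm]
  congr 1
  ext s
  constructor
  · rintro ⟨u, v, h⟩
    exact ⟨v, u, by rw [h, dist_comm a u, dist_comm v b]; ring⟩
  · rintro ⟨u, v, h⟩
    exact ⟨v, u, by rw [h, dist_comm b u, dist_comm v a]; ring⟩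

theorem sig_triangle (hψ0 : ∀ z, 0 ≤ ψ z) (a b c : X) :
    sig ψ a c ≤ sig ψ a b + sig ψ b c := by
  have key : ∀ s ∈ sigSet ψ a b, ∀ t ∈ sigSet ψ b c, sig ψ a c ≤ s + t := by
    intro s hs t ht
    rcases hs with hs | ⟨u, v, hs⟩ <;> rcases ht with ht | ⟨u', v', ht⟩
    · rw [hs, ht]
      exact (sig_le_dist hψ0 a c).trans (dist_triangle a b c)
    · rw [hs, ht]
      have h1 : sig ψ a c ≤ dist a u' + ψ u' + ψ v' + dist v' c :=
        csInf_le (sigSet_bddBelow hψ0 a c) (Set.mem_insert_iff.2 (Or.inr ⟨u', v', rfl⟩))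
      have h2 : dist a u' ≤ dist a b + dist b u' := dist_triangle a b u'
      linarith
    · rw [hs, ht]
      have h1 : sig ψ a c ≤ dist a u + ψ u + ψ v + dist v c :=
        csInf_le (sigSet_bddBelow hψ0 a c) (Set.mem_insert_iff.2 (Or.inr ⟨u, v, rfl⟩))
      have h2 : dist v c ≤ dist v b + dist b c := dist_triangle v b c
      linarith
    · rw [hs, ht]
      have h1 : sig ψ a c ≤ dist a u + ψ u + ψ v' + dist v' c :=
        csInf_le (sigSet_bddBelow hψ0 a c) (Set.mem_insert_iff.2 (Or.inr ⟨u, v', rfl⟩))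
      have h2 : (0:ℝ) ≤ dist v b := dist_nonneg
      have h3 : (0:ℝ) ≤ dist b u' := dist_nonneg
      have h4 := hψ0 v; have h5 := hψ0 u'
      linarith
  have h1 : ∀ s ∈ sigSet ψ a b, sig ψ a c - s ≤ sig ψ b c := by
    intro s hs
    refine le_csInf (sigSet_nonempty b c) fun t ht => ?_
    linarith [key s hs t ht]
  have h2 : sig ψ a c - sig ψ b c ≤ sig ψ a b := by
    refine le_csInf (sigSet_nonempty a b) fun s hs => ?_
    linarith [h1 s hs]
  linarith

theorem sig_small {x : X} (hψ0 : ∀ z, 0 ≤ ψ z)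
    (hB : ∀ ε > 0, ∃ η > 0, ∀ z : X, ψ z < η → dist z x < ε) :
    ∀ ε > 0, ∃ η > 0, ∀ a b : X, sig ψ a b < η → dist a b < ε := by
  intro ε hε
  obtain ⟨η₀, hη₀pos, hη₀⟩ := hB (ε/4) (by linarith)
  refine ⟨min η₀ (ε/4), by positivity, fun a b hab => ?_⟩
  obtain ⟨s, hs, hslt⟩ := exists_lt_of_csInf_lt (sigSet_nonempty a b) hab
  have hsη : s < η₀ := lt_of_lt_of_le hslt (min_le_left _ _)
  have hsε : s < ε/4 := lt_of_lt_of_le hslt (min_le_right _ _)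
  rcases hs with h | ⟨u, v, h⟩
  · rw [h] at hsε; linarith
  · rw [h] at hsη hsε
    have hdau : (0:ℝ) ≤ dist a u := dist_nonneg
    have hdvb : (0:ℝ) ≤ dist v b := dist_nonneg
    have hψu := hψ0 u; have hψv := hψ0 v
    have hux : dist u x < ε/4 := hη₀ u (by linarith)
    have hvx : dist v x < ε/4 := hη₀ v (by linarith)
    have h1 : dist a b ≤ dist a u + dist u x + dist x v + dist v b := by
      have := dist_triangle a u b
      have t1 := dist_triangle a u x
      have t2 := dist_triangle a x b
      have t3 := dist_triangle x v b
      linarith [dist_triangle a x v]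
    have hxv : dist x v < ε/4 := by rw [dist_comm]; exact hvx
    linarith


/-- The new metric. -/
noncomputable def Dm (f : X → X) (ψ : X → ℝ) (a b : X) : ℝ :=
  ⨆ n : ℕ, 2 ^ n * sig ψ (f^[n] a) (f^[n] b)

variable {f : X → X}

theorem psi_iter (hψ0 : ∀ z, 0 ≤ ψ z) (hψ4 : ∀ z, ψ (f z) ≤ ψ z / 4) (z : X) :
    ∀ n : ℕ, ψ (f^[n] z) ≤ (4:ℝ)⁻¹ ^ n * ψ z := by
  intro n
  induction n with
  | zero => simp
  | succ n ih =>
      rw [Function.iterate_succ_apply']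
      have h1 := hψ4 (f^[n] z)
      have h2 : ψ (f^[n] z) / 4 ≤ ((4:ℝ)⁻¹ ^ n * ψ z) / 4 := by linarith
      refine (h1.trans h2).trans (le_of_eq ?_)
      rw [pow_succ]
      ring

theorem Dm_term_le (hψ0 : ∀ z, 0 ≤ ψ z) (hψ4 : ∀ z, ψ (f z) ≤ ψ z / 4) (a b : X) (n : ℕ) :
    2 ^ n * sig ψ (f^[n] a) (f^[n] b) ≤ (2:ℝ)⁻¹ ^ n * (ψ a + ψ b) := by
  have h1 : sig ψ (f^[n] a) (f^[n] b) ≤ ψ (f^[n] a) + ψ (f^[n] b) := sig_le_psi hψ0 _ _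
  have h2 := psi_iter hψ0 hψ4 a n
  have h3 := psi_iter hψ0 hψ4 b n
  have h4 : (2:ℝ) ^ n * sig ψ (f^[n] a) (f^[n] b) ≤ 2 ^ n * ((4:ℝ)⁻¹ ^ n * (ψ a + ψ b)) := by
    have hp : (0:ℝ) < 2 ^ n := by positivity
    nlinarith
  refine h4.trans (le_of_eq ?_)
  rw [← mul_assoc, ← mul_pow]
  norm_num

theorem Dm_bddAbove (hψ0 : ∀ z, 0 ≤ ψ z) (hψ4 : ∀ z, ψ (f z) ≤ ψ z / 4) (a b : X) :
    BddAbove (Set.range fun n : ℕ => 2 ^ n * sig ψ (f^[n] a) (f^[n] b)) := by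
  refine ⟨ψ a + ψ b, Set.forall_mem_range.2 fun n => ?_⟩
  refine (Dm_term_le hψ0 hψ4 a b n).trans ?_
  have h1 : (2:ℝ)⁻¹ ^ n ≤ 1 := pow_le_one₀ (by norm_num) (by norm_num)
  have h2 : 0 ≤ ψ a + ψ b := by have := hψ0 a; have := hψ0 b; linarith
  nlinarith

theorem sig_le_Dm (hψ0 : ∀ z, 0 ≤ ψ z) (hψ4 : ∀ z, ψ (f z) ≤ ψ z / 4) (a b : X) :
    sig ψ a b ≤ Dm f ψ a b := by
  have := le_ciSup (Dm_bddAbove hψ0 hψ4 a b) 0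
  simpa [Dm] using this

theorem Dm_nonneg (hψ0 : ∀ z, 0 ≤ ψ z) (hψ4 : ∀ z, ψ (f z) ≤ ψ z / 4) (a b : X) :
    0 ≤ Dm f ψ a b :=
  (sig_nonneg hψ0 a b).trans (sig_le_Dm hψ0 hψ4 a b)

theorem Dm_self (hψ0 : ∀ z, 0 ≤ ψ z) (a : X) : Dm f ψ a a = 0 := by
  unfold Dm
  have : ∀ n : ℕ, 2 ^ n * sig ψ (f^[n] a) (f^[n] a) = 0 := fun n => by
    rw [sig_self hψ0, mul_zero]
  simp only [this]
  exact ciSup_const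

theorem Dm_comm (a b : X) : Dm f ψ a b = Dm f ψ b a := by
  unfold Dm
  congr 1
  funext n
  rw [sig_comm]

theorem Dm_triangle (hψ0 : ∀ z, 0 ≤ ψ z) (hψ4 : ∀ z, ψ (f z) ≤ ψ z / 4) (a b c : X) :
    Dm f ψ a c ≤ Dm f ψ a b + Dm f ψ b c := by
  refine ciSup_le fun n => ?_
  have h1 : sig ψ (f^[n] a) (f^[n] c) ≤ sig ψ (f^[n] a) (f^[n] b) + sig ψ (f^[n] b) (f^[n] c) :=
    sig_triangle hψ0 _ _ _
  have h2 : (2:ℝ) ^ n * sig ψ (f^[n] a) (f^[n] b) ≤ Dm f ψ a b :=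
    le_ciSup (Dm_bddAbove hψ0 hψ4 a b) n
  have h3 : (2:ℝ) ^ n * sig ψ (f^[n] b) (f^[n] c) ≤ Dm f ψ b c :=
    le_ciSup (Dm_bddAbove hψ0 hψ4 b c) n
  have hp : (0:ℝ) < 2 ^ n := by positivity
  nlinarith

theorem Dm_contract (hψ0 : ∀ z, 0 ≤ ψ z) (hψ4 : ∀ z, ψ (f z) ≤ ψ z / 4) (a b : X) :
    Dm f ψ (f a) (f b) ≤ (1/2) * Dm f ψ a b := by
  refine ciSup_le fun n => ?_
  have h1 : (2:ℝ) ^ (n+1) * sig ψ (f^[n+1] a) (f^[n+1] b) ≤ Dm f ψ a b :=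
    le_ciSup (Dm_bddAbove hψ0 hψ4 a b) (n+1)
  have h2 : f^[n] (f a) = f^[n+1] a := (Function.iterate_succ_apply f n a).symm
  have h3 : f^[n] (f b) = f^[n+1] b := (Function.iterate_succ_apply f n b).symm
  rw [h2, h3]
  rw [pow_succ] at h1
  linarith

theorem Dm_eq_zero_imp {x : X} (hψ0 : ∀ z, 0 ≤ ψ z) (hψ4 : ∀ z, ψ (f z) ≤ ψ z / 4)
    (hB : ∀ ε > 0, ∃ η > 0, ∀ z : X, ψ z < η → dist z x < ε) {a b : X}
    (h : Dm f ψ a b = 0) : a = b := by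
  by_contra hab
  have hd : 0 < dist a b := dist_pos.2 hab
  obtain ⟨η, hηpos, hη⟩ := sig_small hψ0 hB (dist a b) hd
  have h1 : sig ψ a b ≤ 0 := h ▸ sig_le_Dm hψ0 hψ4 a b
  exact absurd (hη a b (lt_of_le_of_lt h1 hηpos)) (lt_irrefl _)


theorem Dm_open_iff {x : X} (hf : Continuous f) (hψcont : Continuous ψ)
    (hψ0 : ∀ z, 0 ≤ ψ z) (hψ4 : ∀ z, ψ (f z) ≤ ψ z / 4)
    (hB : ∀ ε > 0, ∃ η > 0, ∀ z : X, ψ z < η → dist z x < ε) :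
    ∀ s : Set X, IsOpen s ↔ ∀ a ∈ s, ∃ ε > 0, ∀ b, Dm f ψ a b < ε → b ∈ s := by
  intro s
  constructor
  · intro hs a ha
    obtain ⟨ε₀, hε₀pos, hball⟩ := Metric.isOpen_iff.1 hs a ha
    obtain ⟨η, hηpos, hη⟩ := sig_small hψ0 hB ε₀ hε₀pos
    refine ⟨η, hηpos, fun b hb => ?_⟩
    have h1 : sig ψ a b ≤ Dm f ψ a b := sig_le_Dm hψ0 hψ4 a b
    have h2 : dist a b < ε₀ := hη a b (lt_of_le_of_lt h1 hb)
    exact hball (mem_ball.2 (by rwa [dist_comm]))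
  · intro h
    rw [Metric.isOpen_iff]
    intro a ha
    obtain ⟨ε, hεpos, hball⟩ := h a ha
    obtain ⟨δψ, hδψpos, hδψ⟩ := Metric.continuousAt_iff.1 hψcont.continuousAt 1 one_pos
    have hpos : (0:ℝ) < 2 * ψ a + 1 := by have := hψ0 a; linarith
    obtain ⟨N, hN⟩ := exists_pow_lt_of_lt_one (x := (ε/2) / (2 * ψ a + 1)) (y := (2:ℝ)⁻¹)
      (by positivity) (by norm_num)
    have htail : (2:ℝ)⁻¹ ^ N * (2 * ψ a + 1) < ε/2 := (lt_div_iff₀ hpos).1 hN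
    set ε' : ℝ := ε / (2 * 2 ^ N) with hε'def
    have hε'pos : 0 < ε' := by positivity
    have hδf' : ∀ n : ℕ, ∃ δ > 0, ∀ y : X, dist y a < δ → dist (f^[n] y) (f^[n] a) < ε' :=
      fun n => by
        obtain ⟨δ, hδpos, hδ⟩ := Metric.continuousAt_iff.1 (hf.iterate n).continuousAt ε' hε'pos
        exact ⟨δ, hδpos, fun y hy => hδ hy⟩
    choose δf hδfpos hδf using hδf'
    have hrne : (Finset.range (N+1)).Nonempty := Finset.nonempty_range_iff.2 (Nat.succ_ne_zero N)
    set δ := min δψ ((Finset.range (N+1)).inf' hrne δf) with hδdef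
    have hδpos : 0 < δ := by
      rw [hδdef]
      refine lt_min hδψpos ?_
      rw [Finset.lt_inf'_iff]
      intro i _
      exact hδfpos i
    refine ⟨δ, hδpos, fun b hb => ?_⟩
    have hba : dist b a < δ := mem_ball.1 hb
    have hψb : ψ b < ψ a + 1 := by
      have h1 := hδψ (lt_of_lt_of_le hba (min_le_left _ _))
      rw [Real.dist_eq] at h1
      have h2 := abs_lt.1 h1
      linarith [h2.2]
    have hkey : ∀ n : ℕ, 2 ^ n * sig ψ (f^[n] a) (f^[n] b) ≤
        max (ε/2) ((2:ℝ)⁻¹ ^ N * (2 * ψ a + 1)) := by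
      intro n
      rcases le_or_gt n N with hn | hn
      · refine le_max_of_le_left ?_
        have h1 : sig ψ (f^[n] a) (f^[n] b) ≤ dist (f^[n] a) (f^[n] b) := sig_le_dist hψ0 _ _
        have h2 : dist (f^[n] b) (f^[n] a) < ε' :=
          hδf n b (lt_of_lt_of_le hba (le_trans (min_le_right _ _)
            (Finset.inf'_le δf (Finset.mem_range.2 (Nat.lt_succ_of_le hn)))))
        rw [dist_comm] at h2
        have h4 : (2:ℝ) ^ n ≤ 2 ^ N := pow_le_pow_right₀ (by norm_num) hn
        have h5 : (2:ℝ) ^ n * sig ψ (f^[n] a) (f^[n] b) ≤ 2 ^ n * ε' := by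
          have hp : (0:ℝ) < 2 ^ n := by positivity
          nlinarith [sig_nonneg hψ0 (f^[n] a) (f^[n] b)]
        have h6 : (2:ℝ) ^ n * ε' ≤ 2 ^ N * ε' := by nlinarith
        have h7 : (2:ℝ) ^ N * ε' = ε / 2 := by
          rw [hε'def]
          have : (2:ℝ) ^ N ≠ 0 := by positivity
          field_simp
        linarith
      · refine le_max_of_le_right ?_
        have h1 := Dm_term_le hψ0 hψ4 a b n
        have h2 : (2:ℝ)⁻¹ ^ n ≤ (2:ℝ)⁻¹ ^ N :=
          pow_le_pow_of_le_one (by norm_num) (by norm_num) hn.le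
        have h3 : ψ a + ψ b ≤ 2 * ψ a + 1 := by linarith
        have h4 : (0:ℝ) ≤ ψ a + ψ b := by have := hψ0 a; have := hψ0 b; linarith
        have h5 : (0:ℝ) ≤ (2:ℝ)⁻¹ ^ n := by positivity
        have h6 : (0:ℝ) ≤ (2:ℝ)⁻¹ ^ N := by positivity
        nlinarith
    have hDb : Dm f ψ a b ≤ max (ε/2) ((2:ℝ)⁻¹ ^ N * (2 * ψ a + 1)) := ciSup_le hkey
    exact hball b (lt_of_le_of_lt hDb (max_lt (by linarith) (by linarith)))

end ConverseBanachAux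

open ConverseBanachAux in
/-- **A converse of the Banach contraction theorem (Jánoš/Opoitsev-type).**
On a locally compact complete metric space, a continuous map with an attractive and
stable fixed point is a contraction with respect to some metric inducing the same
topology. -/
theorem exists_equivalent_metric_contraction
    {X : Type*} [m₀ : MetricSpace X] [LocallyCompactSpace X] [CompleteSpace X]
    (f : X → X) (hf : Continuous f) (x : X) (hfix : f x = x)
    (hattr : ∀ z : X, Tendsto (fun n => dist (f^[n] z) x) atTop (nhds 0))
    (hstab : ∀ ε > 0, ∃ δ > 0, ∀ z : X, dist z x < δ → ∀ n : ℕ, dist (f^[n] z) x < ε) :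
    ∃ m : MetricSpace X,
      m.toUniformSpace.toTopologicalSpace = m₀.toUniformSpace.toTopologicalSpace ∧
      ∃ c : ℝ, 0 ≤ c ∧ c < 1 ∧
        ∀ a b : X, @dist X m.toDist (f a) (f b) ≤ c * @dist X m.toDist a b := by
  obtain ⟨ψ, hψcont, hψ0, hψ4, hB⟩ := exists_psi f hf x hfix hattr hstab
  refine ⟨MetricSpace.ofDistTopology (Dm f ψ)
      (Dm_self hψ0) (fun a b => Dm_comm a b)
      (Dm_triangle hψ0 hψ4)
      (Dm_open_iff hf hψcont hψ0 hψ4 hB)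
      (fun a b h => Dm_eq_zero_imp hψ0 hψ4 hB h), rfl, 1/2, by norm_num, by norm_num,
    fun a b => ?_⟩
  have := Dm_contract (f := f) hψ0 hψ4 a b
  calc @dist X (MetricSpace.ofDistTopology (Dm f ψ) (Dm_self hψ0) (fun a b => Dm_comm a b)
      (Dm_triangle hψ0 hψ4) (Dm_open_iff hf hψcont hψ0 hψ4 hB)
      (fun a b h => Dm_eq_zero_imp hψ0 hψ4 hB h)).toDist (f a) (f b)
      = Dm f ψ (f a) (f b) := rfl
    _ ≤ (1/2) * Dm f ψ a b := this
    _ = 1/2 * @dist X (MetricSpace.ofDistTopology (Dm f ψ) (Dm_self hψ0)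
        (fun a b => Dm_comm a b) (Dm_triangle hψ0 hψ4) (Dm_open_iff hf hψcont hψ0 hψ4 hB)
        (fun a b h => Dm_eq_zero_imp hψ0 hψ4 hB h)).toDist a b := rfl
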